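/- Assume a ≠ 1 and let I₀ be an inverse marginal function. Set Φ₀(y) = I₀(a·c·y) − b·I₀(c·y) and Ψ₀(y) = y^{−L}·I₀(c·y) for y > 0, where L = ln b / ln a. Suppose Φ₀ is strictly increasing on (0,∞) and that either (a > 1 and lim_{y→∞} Ψ₀(y) = 0) or (a < 1 and lim_{y→0+} Ψ₀(y) = 0). Then for every y > 0 the series I₁(y) = ((1+b)/b)·∑_{m=0}^{∞} (−1)^m · b^{−m} · I₀(a^m · c · y) converges, and the resulting function I₁ satisfies the functional equation I₁(a·y) + b·I₁(y) = (1+b)·I₀(c·y) for all y > 0. -/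

import Mathlib

open Set Filter

noncomputable section

/-- A utility function: `C²` on `(0,∞)`, strictly increasing and strictly concave there,
satisfying the Inada conditions. -/
def IsUtility (U : ℝ → ℝ) : Prop :=
  ContDiffOn ℝ 2 U (Set.Ioi 0) ∧
  (∀ x > 0, 0 < deriv U x) ∧
  (∀ x > 0, deriv (deriv U) x < 0) ∧
  Tendsto (deriv U) (nhdsWithin 0 (Set.Ioi 0)) atTop ∧
  Tendsto (deriv U) atTop (nhds 0)

/-- An inverse marginal function: positive, `C¹` on `(0,∞)`, strictly decreasing derivative,
with `I(∞)=0` and `I(0+)=∞`. -/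
def IsInvMarginal (I : ℝ → ℝ) : Prop :=
  (∀ y > 0, 0 < I y) ∧
  ContDiffOn ℝ 1 I (Set.Ioi 0) ∧
  (∀ y > 0, deriv I y < 0) ∧
  Tendsto I atTop (nhds 0) ∧
  Tendsto I (nhdsWithin 0 (Set.Ioi 0)) atTop

/-- `I` is the inverse of the marginal `U'` on the positive reals: `I = (U')⁻¹`. -/
def InvMarginalOf (I U : ℝ → ℝ) : Prop :=
  (∀ x > 0, I (deriv U x) = x) ∧ (∀ y > 0, 0 < I y ∧ deriv U (I y) = y)

/-- `J` is the inverse function of `I` on the positive reals. -/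
def IsInverseOf (J I : ℝ → ℝ) : Prop :=
  (∀ y > 0, J (I y) = y) ∧ (∀ x > 0, 0 < J x ∧ I (J x) = x)

/-- The single-period inverse investment problem:
`U₀(x) = sup {p·U₁(x+π(u−1)) + (1−p)·U₁(x+π(d−1)) : −x/(u−1) ≤ π ≤ x/(1−d)}` for all `x > 0`. -/
def SPIIP (u d p : ℝ) (U₀ U₁ : ℝ → ℝ) : Prop :=
  ∀ x > 0, U₀ x =
    sSup ((fun pi => p * U₁ (x + pi * (u - 1)) + (1 - p) * U₁ (x + pi * (d - 1))) ''
      Set.Icc (-(x / (u - 1))) (x / (1 - d)))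

/-- Under the increasing-`Φ₀` conditions, the alternating series
`I₁(y) = ((1+b)/b)·∑ (−1)^m b^{−m} I₀(a^m c y)` converges for every `y > 0`, and the resulting
function solves the functional equation. -/
theorem stmt11
    (u d p q a b c L : ℝ)
    (hu : 1 < u) (hd0 : 0 < d) (hd1 : d < 1) (hp0 : 0 < p) (hp1 : p < 1)
    (hq : q = (1 - d) / (u - d)) (ha : a = ((1 - p) * q) / (p * (1 - q)))
    (hb : b = (1 - q) / q) (hc : c = (1 - p) / (1 - q))
    (ha1 : a ≠ 1)
    (hL : L = Real.log b / Real.log a)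
    (I₀ : ℝ → ℝ) (hI₀ : IsInvMarginal I₀)
    (hΦ : StrictMonoOn (fun y => I₀ (a * c * y) - b * I₀ (c * y)) (Set.Ioi 0))
    (hΨ : (1 < a ∧ Tendsto (fun y => y ^ (-L) * I₀ (c * y)) atTop (nhds 0)) ∨
          (a < 1 ∧ Tendsto (fun y => y ^ (-L) * I₀ (c * y)) (nhdsWithin 0 (Set.Ioi 0)) (nhds 0))) :
    ∃ I₁ : ℝ → ℝ,
      (∀ y > 0, Tendsto
        (fun N => ∑ m ∈ Finset.range N,
          ((1 + b) / b) * ((-1 : ℝ) ^ m * b ^ (-(m : ℤ)) * I₀ (a ^ m * c * y)))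
        atTop (nhds (I₁ y))) ∧
      (∀ y > 0, I₁ (a * y) + b * I₁ y = (1 + b) * I₀ (c * y)) := by
  obtain ⟨hI₀pos, hI₀C1, hI₀d, hI₀top, hI₀zero⟩ := hI₀
  have hud : 0 < u - d := by linarith
  have hq0 : 0 < q := by rw [hq]; exact div_pos (by linarith) hud
  have hq1 : q < 1 := by rw [hq, div_lt_one hud]; linarith
  have ha0 : 0 < a := by
    rw [ha]; exact div_pos (mul_pos (by linarith) hq0) (mul_pos hp0 (by linarith))
  have hb0 : 0 < b := by rw [hb]; exact div_pos (by linarith) hq0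
  have hc0 : 0 < c := by rw [hc]; exact div_pos (by linarith) (by linarith)
  have hbz : b ≠ 0 := ne_of_gt hb0
  have hlogane : Real.log a ≠ 0 := by
    intro h
    rcases Real.log_eq_zero.mp h with h' | h' | h' <;> [linarith; exact ha1 h'; linarith]
  have haL : a ^ L = b := by
    rw [Real.rpow_def_of_pos ha0, hL, mul_comm, div_mul_cancel₀ _ hlogane, Real.exp_log hb0]
  -- b ^ (-m) = (a^m) ^ (-L)  (zpow on the left, rpow on the right)
  have hbm : ∀ m : ℕ, b ^ (-(m : ℤ)) = (a ^ m) ^ (-L) := by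
    intro m
    rw [← Real.rpow_intCast b (-(m : ℤ)), ← Real.rpow_natCast a m,
      ← Real.rpow_mul ha0.le, ← haL, ← Real.rpow_mul ha0.le]
    congr 1
    push_cast
    ring
  set t : ℝ → ℕ → ℝ := fun y m => b ^ (-(m : ℤ)) * I₀ (a ^ m * c * y) with ht
  -- the terms tend to 0
  have ht0 : ∀ y : ℝ, 0 < y → Tendsto (t y) atTop (nhds 0) := by
    intro y hy
    have hrw : ∀ m : ℕ, t y m = y ^ L * ((a ^ m * y) ^ (-L) * I₀ (c * (a ^ m * y))) := by
      intro m
      have h1 : (a ^ m * y) ^ (-L) = (a ^ m) ^ (-L) * y ^ (-L) :=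
        Real.mul_rpow (pow_nonneg ha0.le m) hy.le
      have h2 : c * (a ^ m * y) = a ^ m * c * y := by ring
      simp only [ht, h2, h1, hbm m]
      rw [show y ^ L * ((a ^ m) ^ (-L) * y ^ (-L) * I₀ (a ^ m * c * y)) =
        (y ^ L * y ^ (-L)) * ((a ^ m) ^ (-L) * I₀ (a ^ m * c * y)) by ring,
        ← Real.rpow_add hy, add_neg_cancel, Real.rpow_zero, one_mul]
    have hz : Tendsto (fun m : ℕ => (a ^ m * y) ^ (-L) * I₀ (c * (a ^ m * y))) atTop (nhds 0) := by
      rcases hΨ with ⟨ha1', hpsi⟩ | ⟨ha1', hpsi⟩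
      · have h1 : Tendsto (fun m : ℕ => a ^ m * y) atTop atTop :=
          (tendsto_pow_atTop_atTop_of_one_lt ha1').atTop_mul_const hy
        exact hpsi.comp h1
      · have h1 : Tendsto (fun m : ℕ => a ^ m * y) atTop (nhdsWithin 0 (Set.Ioi 0)) := by
          rw [tendsto_nhdsWithin_iff]
          constructor
          · have := (tendsto_pow_atTop_nhds_zero_of_lt_one ha0.le ha1').mul_const y
            simpa using this
          · exact Filter.Eventually.of_forall fun m =>
              mul_pos (pow_pos ha0 m) hy
        exact hpsi.comp h1
    have := hz.const_mul (y ^ L)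
    rw [mul_zero] at this
    exact this.congr fun m => (hrw m).symm
  -- key decomposition of successive terms
  have hdec : ∀ y : ℝ, ∀ m : ℕ,
      t y (m + 1) = b ^ (-((m : ℤ) + 1)) *
        (I₀ (a * c * (a ^ m * y)) - b * I₀ (c * (a ^ m * y))) + t y m := by
    intro y m
    have h1 : a * c * (a ^ m * y) = a ^ (m + 1) * c * y := by ring
    have h2 : c * (a ^ m * y) = a ^ m * c * y := by ring
    have h3 : b ^ (-(m : ℤ)) = b ^ (-((m : ℤ) + 1)) * b := by
      rw [← zpow_add_one₀ hbz]; congr 1; ring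
    have h4 : (((m : ℕ) + 1 : ℕ) : ℤ) = (m : ℤ) + 1 := by push_cast; ring
    simp only [ht, h1, h2, h4]
    linear_combination (-(I₀ (a ^ m * c * y))) * h3
  -- there is always an index where Φ₀ is nonpositive
  have hA : ∀ y : ℝ, 0 < y →
      ∃ m : ℕ, I₀ (a * c * (a ^ m * y)) - b * I₀ (c * (a ^ m * y)) ≤ 0 := by
    intro y hy
    by_contra hcon
    push_neg at hcon
    have hmono : ∀ m : ℕ, t y 0 ≤ t y m := by
      intro m
      induction m with
      | zero => exact le_refl _
      | succ n ih =>
        have := hdec y n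
        have hpos : 0 < b ^ (-((n : ℤ) + 1)) *
            (I₀ (a * c * (a ^ n * y)) - b * I₀ (c * (a ^ n * y))) :=
          mul_pos (zpow_pos hb0 _) (hcon n)
        linarith [this]
    have ht00 : t y 0 = I₀ (c * y) := by simp [ht]
    have hpos0 : 0 < I₀ (c * y) := hI₀pos _ (mul_pos hc0 hy)
    have hev : ∀ᶠ m in atTop, t y m < I₀ (c * y) :=
      (ht0 y hy).eventually (gt_mem_nhds hpos0)
    obtain ⟨m, hm⟩ := hev.exists
    have := hmono m
    rw [ht00] at this
    linarith
  -- eventual antitonicity of the terms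
  have hEv : ∀ y : ℝ, 0 < y → ∃ m₀ : ℕ, ∀ m, m₀ ≤ m → t y (m + 1) ≤ t y m := by
    intro y hy
    have hstep : ∀ m : ℕ, I₀ (a * c * (a ^ m * y)) - b * I₀ (c * (a ^ m * y)) ≤ 0 →
        t y (m + 1) ≤ t y m := by
      intro m hm
      have := hdec y m
      have hnp : b ^ (-((m : ℤ) + 1)) *
          (I₀ (a * c * (a ^ m * y)) - b * I₀ (c * (a ^ m * y))) ≤ 0 :=
        mul_nonpos_of_nonneg_of_nonpos (le_of_lt (zpow_pos hb0 _)) hm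
      linarith [this]
    rcases hΨ with ⟨ha1', _⟩ | ⟨ha1', _⟩
    · -- a > 1 : Φ₀ ≤ 0 everywhere
      refine ⟨0, fun m _ => hstep m ?_⟩
      set z := a ^ m * y with hz
      have hz0 : 0 < z := mul_pos (pow_pos ha0 m) hy
      obtain ⟨k, hk⟩ := hA z hz0
      have hle : z ≤ a ^ k * z := by
        nth_rewrite 1 [← one_mul z]
        exact mul_le_mul_of_nonneg_right (one_le_pow₀ (le_of_lt ha1')) hz0.le
      have := hΦ.monotoneOn (Set.mem_Ioi.mpr hz0)
        (Set.mem_Ioi.mpr (mul_pos (pow_pos ha0 k) hz0)) hle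
      linarith
    · -- a < 1 : Φ₀ ≤ 0 on the tail
      obtain ⟨m₀, hm₀⟩ := hA y hy
      refine ⟨m₀, fun m hm => hstep m ?_⟩
      have hle : a ^ m * y ≤ a ^ m₀ * y :=
        mul_le_mul_of_nonneg_right (pow_le_pow_of_le_one ha0.le ha1'.le hm) hy.le
      have := hΦ.monotoneOn (Set.mem_Ioi.mpr (mul_pos (pow_pos ha0 m) hy))
        (Set.mem_Ioi.mpr (mul_pos (pow_pos ha0 m₀) hy)) hle
      linarith
  -- convergence of the alternating series
  have key : ∀ y : ℝ, 0 < y →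
      ∃ l : ℝ, Tendsto (fun N => ∑ m ∈ Finset.range N, (-1 : ℝ) ^ m * t y m)
        atTop (nhds l) := by
    intro y hy
    obtain ⟨m₀, hm₀⟩ := hEv y hy
    set g : ℕ → ℝ := fun k => t y (m₀ + k) with hg
    have hganti : Antitone g := by
      apply antitone_nat_of_succ_le
      intro k
      exact hm₀ (m₀ + k) (Nat.le_add_right _ _)
    have hg0 : Tendsto g atTop (nhds 0) := by
      have := (ht0 y hy).comp (tendsto_add_atTop_nat m₀)
      exact this.congr fun k => congrArg (t y) (Nat.add_comm k m₀)
    obtain ⟨l, hl⟩ := hganti.tendsto_alternating_series_of_tendsto_zero hg0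
    set C : ℝ := ∑ m ∈ Finset.range m₀, (-1 : ℝ) ^ m * t y m with hC
    refine ⟨C + (-1 : ℝ) ^ m₀ * l, ?_⟩
    rw [← tendsto_add_atTop_iff_nat m₀]
    have hmain : Tendsto (fun n => C + (-1 : ℝ) ^ m₀ *
        ∑ i ∈ Finset.range n, (-1 : ℝ) ^ i * g i) atTop
        (nhds (C + (-1 : ℝ) ^ m₀ * l)) :=
      tendsto_const_nhds.add (hl.const_mul _)
    refine hmain.congr fun n => ?_
    rw [add_comm n m₀, Finset.sum_range_add, ← hC, Finset.mul_sum]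
    congr 1
    refine Finset.sum_congr rfl fun i _ => ?_
    rw [pow_add]
    ring
  choose T hT using key
  set Tf : ℝ → ℝ := fun y => if h : 0 < y then T y h else 0 with hTf
  have hTft : ∀ y : ℝ, (h : 0 < y) →
      Tendsto (fun N => ∑ m ∈ Finset.range N, (-1 : ℝ) ^ m * t y m) atTop (nhds (Tf y)) := by
    intro y h
    rw [hTf]; simp only [dif_pos h]; exact hT y h
  -- the partial-sum functional equation
  have hP : ∀ y : ℝ, ∀ N : ℕ,
      (∑ m ∈ Finset.range N, (-1 : ℝ) ^ m * t (a * y) m) +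
        b * ∑ m ∈ Finset.range (N + 1), (-1 : ℝ) ^ m * t y m = b * I₀ (c * y) := by
    intro y N
    induction N with
    | zero => simp [ht]
    | succ n ih =>
      rw [Finset.sum_range_succ ((fun m => (-1 : ℝ) ^ m * t (a * y) m)) n,
        Finset.sum_range_succ ((fun m => (-1 : ℝ) ^ m * t y m)) (n + 1)]
      have harg : a ^ n * c * (a * y) = a ^ (n + 1) * c * y := by ring
      have h3 : b ^ (-(n : ℤ)) = b ^ (-((n : ℤ) + 1)) * b := by
        rw [← zpow_add_one₀ hbz]; congr 1; ring
      have h4 : (((n : ℕ) + 1 : ℕ) : ℤ) = (n : ℤ) + 1 := by push_cast; ring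
      have hterm : (-1 : ℝ) ^ n * t (a * y) n + b * ((-1 : ℝ) ^ (n + 1) * t y (n + 1)) = 0 := by
        simp only [ht, harg, h4]
        linear_combination ((-1 : ℝ) ^ n * I₀ (a ^ (n + 1) * c * y)) * h3
      rw [mul_add]
      linarith [ih, hterm]
  -- the limit functional equation
  have hTeq : ∀ y : ℝ, 0 < y → Tf (a * y) + b * Tf y = b * I₀ (c * y) := by
    intro y hy
    have h1 := hTft (a * y) (mul_pos ha0 hy)
    have h2 : Tendsto (fun N => ∑ m ∈ Finset.range (N + 1), (-1 : ℝ) ^ m * t y m)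
        atTop (nhds (Tf y)) := (hTft y hy).comp (tendsto_add_atTop_nat 1)
    have h3 := h1.add (h2.const_mul b)
    have h4 : Tendsto (fun N : ℕ => b * I₀ (c * y)) atTop
        (nhds (Tf (a * y) + b * Tf y)) := by
      exact h3.congr fun N => hP y N
    exact tendsto_nhds_unique h4 tendsto_const_nhds
  refine ⟨fun y => (1 + b) / b * Tf y, ?_, ?_⟩
  · intro y hy
    have := (hTft y hy).const_mul ((1 + b) / b)
    refine this.congr fun N => ?_
    rw [Finset.mul_sum]
    refine Finset.sum_congr rfl fun m _ => ?_
    simp only [ht]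
    ring
  · intro y hy
    have := hTeq y hy
    field_simp
    rw [mul_comm c y] at this
    nlinarith [this]
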